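/- arXiv:2503.06634 — 2 statements merged into one kernel-verified Lean document; each statement's English description precedes it below -/
import Mathlib

section
/- Fix x₀ ∈ ℝ^d and define the transverse-gauge potential A^{(x₀)}_j(x₀ + Z) = Σ_{k=1}^d ( ∫₀¹ B_{kj}(x₀ + τZ)·τ dτ )·Z_k for j = 1,…,d. Then for every integer r ≥ 1, every j, and every Z ∈ ℝ^d, the degree-r homogeneous Taylor term of A^{(x₀)}_j at x₀ is given by: (1/r!)·D^r A^{(x₀)}_j(x₀)[Z,…,Z] = (1/(r+1)) · Σ_{k=1}^d Z_k · (1/(r−1)!)·D^{r−1} B_{kj}(x₀)[Z,…,Z], where D^m f(x₀)[Z,…,Z] denotes the m-th iterated Fréchet derivative of f at x₀ evaluated at m copies of Z (equivalently, Σ_{|α|=r} ∂^α A^{(x₀)}_j(x₀) Z^α/α! = (1/(r+1)) Σ_{|α|=r−1} Σ_k ∂^α B_{kj}(x₀) Z_k Z^α/α!). -/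
open MeasureTheory Filter Metric Set intervalIntegral
open scoped ContDiff
set_option synthInstance.maxHeartbeats 1000000
set_option maxHeartbeats 1000000

noncomputable section

/-- Euclidean space `ℝ^d`. -/
abbrev Rd (d : ℕ) : Type := EuclideanSpace ℝ (Fin d)

/-- Partial derivative in the `j`-th coordinate direction. -/
def pd {d : ℕ} {E : Type*} [NormedAddCommGroup E] [NormedSpace ℝ E]
    (j : Fin d) (f : Rd d → E) (x : Rd d) : E :=
  fderiv ℝ f x (EuclideanSpace.single j 1)

/-- The magnetic field `B_{jk} = ∂_j A_k - ∂_k A_j`. -/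
def magField {d : ℕ} (A : Fin d → Rd d → ℝ) (j k : Fin d) (x : Rd d) : ℝ :=
  pd j (A k) x - pd k (A j) x

/-- The magnetic covariant derivative `(ℏ/i) ∂_j - A_j`. -/
def magD {d : ℕ} (ℏ : ℝ) (A : Fin d → Rd d → ℝ) (j : Fin d) (u : Rd d → ℂ) (x : Rd d) : ℂ :=
  (ℏ : ℂ) / Complex.I * pd j u x - (A j x : ℂ) * u x

/-- The semiclassical magnetic Schrödinger operator
`H_ℏ u = Σ_j ((ℏ/i)∂_j - A_j)² u + ℏ V u`. -/
def schrodinger {d : ℕ} (ℏ : ℝ) (A : Fin d → Rd d → ℝ) (V : Rd d → ℝ)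
    (u : Rd d → ℂ) (x : Rd d) : ℂ :=
  ∑ j, magD ℏ A j (magD ℏ A j u) x + (ℏ : ℂ) * (V x : ℂ) * u x

/-- The L² norm of a function on `ℝ^d` (w.r.t. Lebesgue measure). -/
def l2norm {d : ℕ} (f : Rd d → ℂ) : ℝ :=
  Real.sqrt (∫ x, ‖f x‖ ^ 2)

/-- The gauge function `Φ^{(x₀)}(x₀+Z) = -Σ_j ∫₀¹ A_j(x₀+τZ) Z_j dτ`. -/
def PhiGauge {d : ℕ} (A : Fin d → Rd d → ℝ) (x₀ : Rd d) (x : Rd d) : ℝ :=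
  -∑ j, ∫ τ in (0:ℝ)..1, A j (x₀ + τ • (x - x₀)) * (x - x₀) j

/-- The transverse-gauge potential `A^{(x₀)}_j(x₀+Z) = Σ_k (∫₀¹ B_{kj}(x₀+τZ) τ dτ) Z_k`. -/
def Atrans {d : ℕ} (A : Fin d → Rd d → ℝ) (x₀ : Rd d) (j : Fin d) (x : Rd d) : ℝ :=
  ∑ k, (∫ τ in (0:ℝ)..1, magField A k j (x₀ + τ • (x - x₀)) * τ) * (x - x₀) k

lemma one_le_inf : (1:WithTop ℕ∞) ≤ ∞ := by simp
lemma inf_add_one : (∞:WithTop ℕ∞) + 1 ≤ ∞ := by simp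

noncomputable section

theorem hasFDerivAt_parint {H : Type} [NormedAddCommGroup H] [NormedSpace ℝ H]
    [FiniteDimensional ℝ H] {E : Type} [NormedAddCommGroup E] [NormedSpace ℝ E]
    [CompleteSpace E]
    (F : H → ℝ → E) (hF : ContDiff ℝ ∞ (fun p : H × ℝ => F p.1 p.2)) (x₀ : H) :
    HasFDerivAt (fun x => ∫ t in (0:ℝ)..1, F x t)
      (∫ t in (0:ℝ)..1, (fderiv ℝ (fun p : H × ℝ => F p.1 p.2) (x₀, t)).comp
        ((ContinuousLinearMap.id ℝ H).prod 0)) x₀ := by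
  set F' : H → ℝ → (H →L[ℝ] E) := fun x t =>
    (fderiv ℝ (fun p : H × ℝ => F p.1 p.2) (x, t)).comp
      ((ContinuousLinearMap.id ℝ H).prod 0) with hF'def
  have hdiff : ∀ (x : H) (t : ℝ), HasFDerivAt (fun y => F y t) (F' x t) x := by
    intro x t
    have h1 : HasFDerivAt (fun p : H × ℝ => F p.1 p.2)
        (fderiv ℝ (fun p : H × ℝ => F p.1 p.2) (x, t)) (x, t) :=
      ((hF.differentiable (by simp)) (x, t)).hasFDerivAt
    have h2 : HasFDerivAt (fun y : H => (y, t))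
        ((ContinuousLinearMap.id ℝ H).prod 0) x :=
      (hasFDerivAt_id x).prodMk (hasFDerivAt_const t x)
    exact h1.comp x h2
  have hFc : Continuous (fun p : H × ℝ => F p.1 p.2) := hF.continuous
  have hF'c : Continuous (fun p : H × ℝ => F' p.1 p.2) := by
    have : ContDiff ℝ ∞ fun p : H × ℝ =>
        (fderiv ℝ (fun p : H × ℝ => F p.1 p.2) p).comp
          ((ContinuousLinearMap.id ℝ H).prod 0) :=
      ContDiff.clm_comp (hF.fderiv_right inf_add_one)
        (contDiff_const (c := (ContinuousLinearMap.id ℝ H).prod 0))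
    exact this.continuous
  have hK : IsCompact (closedBall x₀ 1 ×ˢ uIcc (0:ℝ) 1) :=
    (isCompact_closedBall x₀ 1).prod isCompact_uIcc
  obtain ⟨C, hC⟩ := hK.exists_bound_of_continuousOn hF'c.continuousOn
  exact intervalIntegral.hasFDerivAt_integral_of_dominated_of_fderiv_le
    (F := F) (F' := F') (bound := fun _ => C) (ball_mem_nhds x₀ one_pos)
    (Eventually.of_forall fun x =>
      (hFc.comp (continuous_const.prodMk continuous_id)).aestronglyMeasurable)
    ((hFc.comp (continuous_const.prodMk continuous_id)).intervalIntegrable 0 1)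
    (hF'c.comp (continuous_const.prodMk continuous_id)).aestronglyMeasurable
    (Eventually.of_forall fun t ht x hx =>
      hC (x, t) ⟨ball_subset_closedBall hx, uIoc_subset_uIcc ht⟩)
    intervalIntegrable_const
    (Eventually.of_forall fun t _ x _ => hdiff x t)

theorem contDiff_parint_aux {H : Type} [NormedAddCommGroup H] [NormedSpace ℝ H]
    [FiniteDimensional ℝ H] (n : ℕ) :
    ∀ {E : Type} [NormedAddCommGroup E] [NormedSpace ℝ E] [CompleteSpace E]
      (F : H → ℝ → E), ContDiff ℝ ∞ (fun p : H × ℝ => F p.1 p.2) →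
      ContDiff ℝ (n : WithTop ℕ∞) (fun x => ∫ t in (0:ℝ)..1, F x t) := by
  induction n with
  | zero =>
    intro E _ _ _ F hF
    exact contDiff_zero.mpr (continuous_iff_continuousAt.mpr fun x =>
      (hasFDerivAt_parint F hF x).differentiableAt.continuousAt)
  | succ n ih =>
    intro E _ _ _ F hF
    rw [show ((n + 1 : ℕ) : WithTop ℕ∞) = (n : WithTop ℕ∞) + 1 by norm_cast,
      contDiff_succ_iff_fderiv]
    refine ⟨fun x => (hasFDerivAt_parint F hF x).differentiableAt, by simp, ?_⟩
    have hfd : fderiv ℝ (fun x => ∫ t in (0:ℝ)..1, F x t) = fun x =>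
        ∫ t in (0:ℝ)..1, (fderiv ℝ (fun p : H × ℝ => F p.1 p.2) (x, t)).comp
          ((ContinuousLinearMap.id ℝ H).prod 0) :=
      funext fun x => (hasFDerivAt_parint F hF x).fderiv
    rw [hfd]
    exact ih (fun x t => (fderiv ℝ (fun p : H × ℝ => F p.1 p.2) (x, t)).comp
        ((ContinuousLinearMap.id ℝ H).prod 0))
      (ContDiff.clm_comp (hF.fderiv_right inf_add_one)
        (contDiff_const (c := (ContinuousLinearMap.id ℝ H).prod 0)))

theorem contDiff_parint {H : Type} [NormedAddCommGroup H] [NormedSpace ℝ H]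
    [FiniteDimensional ℝ H] {E : Type} [NormedAddCommGroup E] [NormedSpace ℝ E]
    [CompleteSpace E] (F : H → ℝ → E)
    (hF : ContDiff ℝ ∞ (fun p : H × ℝ => F p.1 p.2)) :
    ContDiff ℝ ∞ (fun x => ∫ t in (0:ℝ)..1, F x t) := by
  rw [contDiff_infty]
  intro n
  exact contDiff_parint_aux n F hF

theorem iteratedFDeriv_comp_const_add {E F : Type*} [NormedAddCommGroup E] [NormedSpace ℝ E]
    [NormedAddCommGroup F] [NormedSpace ℝ F] (f : E → F) (hf : ContDiff ℝ ∞ f) (c : E) :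
    ∀ (n : ℕ) (x : E),
      iteratedFDeriv ℝ n (fun y => f (c + y)) x = iteratedFDeriv ℝ n f (c + x) := by
  intro n
  induction n with
  | zero =>
    intro x
    exact ContinuousMultilinearMap.ext fun m => by
      simp [iteratedFDeriv_zero_apply]
  | succ n ih =>
    intro x
    simp only [iteratedFDeriv_succ_eq_comp_left, Function.comp_apply]
    congr 1
    rw [funext ih]
    have hd : DifferentiableAt ℝ (iteratedFDeriv ℝ n f) (c + x) :=
      (hf.differentiable_iteratedFDeriv (by exact_mod_cast lt_top_iff_ne_top.2 (by simp))) (c + x)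
    have h2 : HasFDerivAt (fun x => iteratedFDeriv ℝ n f (c + x))
        (fderiv ℝ (iteratedFDeriv ℝ n f) (c + x)) x := by
      have := hd.hasFDerivAt.comp x ((hasFDerivAt_id x).const_add c)
      exact this
    exact h2.fderiv

theorem iteratedDeriv_line {d : ℕ} (f : EuclideanSpace ℝ (Fin d) → ℝ)
    (hf : ContDiff ℝ ∞ f) (x₀ Z : EuclideanSpace ℝ (Fin d)) (n : ℕ) :
    iteratedDeriv n (fun t : ℝ => f (x₀ + t • Z)) 0 =
      iteratedFDeriv ℝ n f x₀ (fun _ => Z) := by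
  set L : ℝ →L[ℝ] EuclideanSpace ℝ (Fin d) :=
    (ContinuousLinearMap.id ℝ ℝ).smulRight Z with hL
  have hg : ContDiff ℝ ∞ (fun y => f (x₀ + y)) :=
    hf.comp (contDiff_const.add contDiff_id)
  have hcomp : (fun t : ℝ => f (x₀ + t • Z)) = (fun y => f (x₀ + y)) ∘ L := rfl
  rw [iteratedDeriv_eq_iteratedFDeriv, hcomp,
    L.iteratedFDeriv_comp_right hg 0 (mod_cast le_top)]
  simp only [ContinuousMultilinearMap.compContinuousLinearMap_apply]
  have : L 0 = 0 := by simp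
  rw [this, iteratedFDeriv_comp_const_add f hf x₀ n 0]
  simp [hL]

theorem contDiff_of_hasDerivAt' {f φ : ℝ → ℝ} (hφ : ContDiff ℝ ∞ φ)
    (h : ∀ t, HasDerivAt f (φ t) t) : ContDiff ℝ ∞ f := by
  rw [contDiff_infty_iff_deriv]
  refine ⟨fun t => (h t).differentiableAt, ?_⟩
  rw [show deriv f = φ from funext fun t => (h t).deriv]
  exact hφ

theorem primitive_contDiff {ψ : ℝ → ℝ} (hψ : Continuous ψ) (t : ℝ) :
    HasDerivAt (fun s => ∫ u in (0:ℝ)..s, ψ u) (ψ t) t :=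
  intervalIntegral.integral_hasDerivAt_right (hψ.intervalIntegrable 0 t)
    (hψ.stronglyMeasurableAtFilter _ _) hψ.continuousAt

theorem iteratedDeriv_add' {f g : ℝ → ℝ} (n : ℕ) (hf : ContDiff ℝ ∞ f)
    (hg : ContDiff ℝ ∞ g) (t : ℝ) :
    iteratedDeriv n (fun s => f s + g s) t = iteratedDeriv n f t + iteratedDeriv n g t := by
  simp only [iteratedDeriv_eq_iteratedFDeriv]
  rw [show (fun s => f s + g s) = f + g from rfl,
    iteratedFDeriv_add_apply (hf.of_le (mod_cast le_top)).contDiffAt (hg.of_le (mod_cast le_top)).contDiffAt]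
  simp

theorem iteratedDeriv_id_mul {n : ℕ} :
    ∀ (f : ℝ → ℝ), ContDiff ℝ ∞ f → ∀ t : ℝ,
      iteratedDeriv (n + 1) (fun s => s * f s) t =
        (n + 1 : ℝ) * iteratedDeriv n f t + t * iteratedDeriv (n + 1) f t := by
  induction n with
  | zero =>
    intro f hf t
    have hdm : deriv (fun s => s * f s) t = f t + t * deriv f t := by
      rw [deriv_fun_mul differentiableAt_fun_id (hf.differentiable (by simp) t)]
      simp
    simp [iteratedDeriv_one, iteratedDeriv_zero, hdm]
  | succ n ih =>
    intro f hf t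
    have hf' : ContDiff ℝ ∞ (deriv f) := (contDiff_infty_iff_deriv.mp hf).2
    have hder : deriv (fun s => s * f s) = fun s => f s + s * deriv f s := by
      funext s
      rw [deriv_fun_mul differentiableAt_fun_id (hf.differentiable (by simp) s)]
      simp
    rw [iteratedDeriv_succ']
    rw [hder]
    rw [iteratedDeriv_add' (f := f) (g := fun s => s * deriv f s) (n + 1) hf (contDiff_id.mul hf') t]
    rw [ih (deriv f) hf' t]
    rw [← iteratedDeriv_succ']
    rw [show iteratedDeriv (n + 1) (deriv f) t = iteratedDeriv (n + 2) f t from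
      congrFun (iteratedDeriv_succ' (n := n + 1) (f := f)).symm t]
    push_cast
    ring

section smooth
variable {d : ℕ} {A : Fin d → Rd d → ℝ} (hA : ∀ j, ContDiff ℝ (⊤ : ℕ∞) (A j))
include hA

theorem magField_contDiff (k j : Fin d) : ContDiff ℝ ∞ (magField A k j) := by
  have h : ∀ (a b : Fin d), ContDiff ℝ ∞ (pd a (A b)) := fun a b =>
    ((hA b).fderiv_right inf_add_one).clm_apply contDiff_const
  exact (h k j).sub (h j k)

theorem Atrans_contDiff (x₀ : Rd d) (j : Fin d) :
    ContDiff ℝ ∞ (fun x : Rd d =>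
      ∑ k, (∫ τ in (0:ℝ)..1, magField A k j (x₀ + τ • (x - x₀)) * τ) * (x - x₀) k) := by
  apply ContDiff.sum
  intro k _
  have h1 : ContDiff ℝ ∞ (fun p : Rd d × ℝ => magField A k j (x₀ + p.2 • (p.1 - x₀)) * p.2) :=
    ((magField_contDiff hA k j).comp
      (contDiff_const.add (contDiff_snd.smul (contDiff_fst.sub contDiff_const)))).mul contDiff_snd
  have h2 : ContDiff ℝ ∞ (fun x : Rd d =>
      ∫ τ in (0:ℝ)..1, magField A k j (x₀ + τ • (x - x₀)) * τ) :=
    contDiff_parint (fun x τ => magField A k j (x₀ + τ • (x - x₀)) * τ) h1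
  have h3 : ContDiff ℝ ∞ (fun x : Rd d => (EuclideanSpace.proj (𝕜 := ℝ) k) (x - x₀)) :=
    (EuclideanSpace.proj (𝕜 := ℝ) k).contDiff.comp (contDiff_id.sub contDiff_const)
  exact h2.mul h3

theorem key_identity (x₀ Z : Rd d) (j : Fin d) (t : ℝ) :
    t * (∑ k, (∫ τ in (0:ℝ)..1, magField A k j (x₀ + τ • ((x₀ + t • Z) - x₀)) * τ)
          * ((x₀ + t • Z) - x₀) k) =
      ∑ k, Z k * ∫ u in (0:ℝ)..t, magField A k j (x₀ + u • Z) * u := by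
  rw [Finset.mul_sum]
  refine Finset.sum_congr rfl fun k _ => ?_
  have hco : ((x₀ + t • Z) - x₀) = t • Z := add_sub_cancel_left x₀ (t • Z)
  rw [hco]
  have happ : (t • Z) k = t * Z k := rfl
  rw [happ]
  have hsm : ∀ τ : ℝ, x₀ + τ • (t • Z) = x₀ + (τ * t) • Z := by
    intro τ; rw [smul_smul]
  simp only [hsm]
  set b : ℝ → ℝ := fun u => magField A k j (x₀ + u • Z) with hbdef
  have hbc : Continuous b := ((magField_contDiff hA k j).comp
    (contDiff_const.add (contDiff_id.smul contDiff_const))).continuous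
  rcases eq_or_ne t 0 with ht | ht
  · simp [ht]
  · have h1 : (fun τ : ℝ => b (τ * t) * τ) = fun τ : ℝ => t⁻¹ * (b (τ * t) * (τ * t)) := by
      funext τ; field_simp
    rw [h1, intervalIntegral.integral_const_mul,
      intervalIntegral.integral_comp_mul_right (fun u => b u * u) ht]
    simp only [zero_mul, one_mul, smul_eq_mul]
    field_simp
    ring
end smooth

theorem iteratedDeriv_sum_const_mul {d : ℕ} (n : ℕ) (c : Fin d → ℝ) (h : Fin d → ℝ → ℝ)
    (hh : ∀ k, ContDiff ℝ ∞ (h k)) (t : ℝ) :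
    iteratedDeriv n (fun s => ∑ k, c k * h k s) t = ∑ k, c k * iteratedDeriv n (h k) t := by
  simp only [iteratedDeriv_eq_iteratedFDeriv]
  rw [show (fun s : ℝ => ∑ k, c k * h k s) = (fun s : ℝ => ∑ k, (c k • h k) s) from by
      funext s; simp [smul_eq_mul]]
  have hsum : iteratedFDeriv ℝ n (fun x : ℝ => ∑ k : Fin d, (c k • h k) x) =
      ∑ k : Fin d, iteratedFDeriv ℝ n (c k • h k) :=
    iteratedFDeriv_sum (fun k _ => (contDiff_const.smul (hh k)).of_le (mod_cast le_top))
  rw [hsum]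
  simp only [ContinuousMultilinearMap.sum_apply, Finset.sum_apply]
  refine Finset.sum_congr rfl fun k _ => ?_
  rw [iteratedFDeriv_const_smul_apply ((hh k).of_le (mod_cast le_top)).contDiffAt]
  simp


/-- the homogeneous Taylor terms of the transverse-gauge potential:
for `r ≥ 1`, `(1/r!) D^r A^{(x₀)}_j(x₀)[Z,…,Z]
  = (1/(r+1)) Σ_k Z_k (1/(r-1)!) D^{r-1} B_{kj}(x₀)[Z,…,Z]`. -/
theorem statement8 (d : ℕ) (A : Fin d → Rd d → ℝ)
    (hA : ∀ j, ContDiff ℝ (⊤ : ℕ∞) (A j)) (x₀ : Rd d)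
    (r : ℕ) (hr : 1 ≤ r) (j : Fin d) (Z : Rd d) :
    ((r.factorial : ℝ))⁻¹ * iteratedFDeriv ℝ r (Atrans A x₀ j) x₀ (fun _ => Z) =
      ((r : ℝ) + 1)⁻¹ * ∑ k, Z k *
        ((((r - 1).factorial : ℝ))⁻¹ *
          iteratedFDeriv ℝ (r - 1) (magField A k j) x₀ (fun _ => Z)) := by
  obtain ⟨m, rfl⟩ : ∃ m, r = m + 1 := ⟨r - 1, (Nat.succ_pred_eq_of_pos hr).symm⟩
  simp only [Nat.add_sub_cancel]
  have hAt : ContDiff ℝ ∞ (Atrans A x₀ j) := Atrans_contDiff hA x₀ j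
  have hline : ContDiff ℝ ∞ (fun t : ℝ => x₀ + t • Z) :=
    contDiff_const.add (contDiff_id.smul contDiff_const)
  set g : ℝ → ℝ := fun t => Atrans A x₀ j (x₀ + t • Z) with hgdef
  set b : Fin d → ℝ → ℝ := fun k u => magField A k j (x₀ + u • Z) with hbdef
  set Hk : Fin d → ℝ → ℝ := fun k s => ∫ u in (0:ℝ)..s, b k u * u with hHdef
  have hg : ContDiff ℝ ∞ g := hAt.comp hline
  have hb : ∀ k, ContDiff ℝ ∞ (b k) := fun k => (magField_contDiff hA k j).comp hline
  have hHd : ∀ k t, HasDerivAt (Hk k) (b k t * t) t := fun k t =>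
    primitive_contDiff ((hb k).continuous.mul continuous_id) t
  have hH : ∀ k, ContDiff ℝ ∞ (Hk k) := fun k =>
    contDiff_of_hasDerivAt' ((hb k).mul contDiff_id) (hHd k)
  have key : (fun t : ℝ => t * g t) = fun t => ∑ k, Z k * Hk k t :=
    funext fun t => key_identity hA x₀ Z j t
  have E1 : iteratedDeriv (m + 2) (fun t => t * g t) 0
      = ((m : ℝ) + 2) * iteratedDeriv (m + 1) g 0 := by
    rw [show m + 2 = (m + 1) + 1 from rfl, iteratedDeriv_id_mul g hg 0]
    push_cast; ring
  have E2 : iteratedDeriv (m + 2) (fun t : ℝ => ∑ k, Z k * Hk k t) 0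
      = ∑ k, Z k * iteratedDeriv (m + 2) (Hk k) 0 :=
    iteratedDeriv_sum_const_mul (m + 2) (fun k => Z k) Hk hH 0
  have E3 : ∀ k, iteratedDeriv (m + 2) (Hk k) 0 = ((m : ℝ) + 1) * iteratedDeriv m (b k) 0 := by
    intro k
    rw [show iteratedDeriv (m + 2) (Hk k) 0 = iteratedDeriv (m + 1) (deriv (Hk k)) 0 from
      congrFun (iteratedDeriv_succ' (n := m + 1) (f := Hk k)) 0]
    have hdH : deriv (Hk k) = fun t => t * b k t :=
      funext fun t => by rw [(hHd k t).deriv]; ring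
    rw [hdH, iteratedDeriv_id_mul (b k) (hb k) 0]
    ring
  have E4 : iteratedDeriv (m + 1) g 0 = iteratedFDeriv ℝ (m + 1) (Atrans A x₀ j) x₀ (fun _ => Z) :=
    iteratedDeriv_line _ hAt x₀ Z (m + 1)
  have E5 : ∀ k, iteratedDeriv m (b k) 0
      = iteratedFDeriv ℝ m (magField A k j) x₀ (fun _ => Z) := fun k =>
    iteratedDeriv_line _ (magField_contDiff hA k j) x₀ Z m
  have main : ((m : ℝ) + 2) * iteratedFDeriv ℝ (m + 1) (Atrans A x₀ j) x₀ (fun _ => Z)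
      = ∑ k, Z k * (((m : ℝ) + 1) * iteratedFDeriv ℝ m (magField A k j) x₀ (fun _ => Z)) := by
    rw [← E4, ← E1, key, E2]
    exact Finset.sum_congr rfl fun k _ => by rw [E3 k, E5 k]
  have h2 : ((m : ℝ) + 2) ≠ 0 := by positivity
  have hmf : ((m.factorial : ℝ)) ≠ 0 := Nat.cast_ne_zero.mpr m.factorial_ne_zero
  have hfac : (((m + 1).factorial : ℝ)) = ((m : ℝ) + 1) * (m.factorial : ℝ) := by
    rw [Nat.factorial_succ]; push_cast; ring
  have hX : iteratedFDeriv ℝ (m + 1) (Atrans A x₀ j) x₀ (fun _ => Z)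
      = ((m : ℝ) + 2)⁻¹ * ∑ k, Z k *
          (((m : ℝ) + 1) * iteratedFDeriv ℝ m (magField A k j) x₀ (fun _ => Z)) := by
    rw [← main, inv_mul_cancel_left₀ h2]
  rw [hX, hfac, show ((↑(m + 1) : ℝ) + 1) = (m : ℝ) + 2 by push_cast; ring]
  simp only [Finset.mul_sum]
  refine Finset.sum_congr rfl fun k _ => ?_
  field_simp
  rfl
end
end
end

section
/- Leading term of the rescaled operator: assume all B_{jk} and V are bounded on ℝ^d together with all their partial derivatives. Fix a smooth compactly supported u : ℝ^d → ℂ. For x₀ ∈ ℝ^d let A^{(x₀)}_j(x₀ + Z) = Σ_k ( ∫₀¹ B_{kj}(x₀ + τZ)·τ dτ )·Z_k be the transverse-gauge potential, and for t ∈ (0,1] define the rescaled operator ℋ_{t,x₀}u(Z) = Σ_{j=1}^d ( (1/i)∂/∂Z_j − t^{-1}A^{(x₀)}_j(x₀ + tZ) )² u(Z) + V(x₀ + tZ)·u(Z), and the model operator ℋ^{(x₀)}u(Z) = Σ_{j=1}^d ( (1/i)∂/∂Z_j − (1/2)Σ_k B_{kj}(x₀)Z_k )² u(Z) + V(x₀)·u(Z).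 Then there is a constant C > 0, depending on u and on the bounds for B, V and their derivatives but not on x₀ or t, such that sup_{Z ∈ ℝ^d} | ℋ_{t,x₀}u(Z) − ℋ^{(x₀)}u(Z) | ≤ C·t for all x₀ ∈ ℝ^d and t ∈ (0,1]. -/
set_option synthInstance.maxHeartbeats 1000000
set_option maxHeartbeats 2000000
open intervalIntegral Metric


open MeasureTheory Filter

noncomputable section

section Helpers

-- coordinate bound
lemma coord_le_norm {d : ℕ} (x : Rd d) (k : Fin d) : ‖x k‖ ≤ ‖x‖ := by
  rw [Real.norm_eq_abs, EuclideanSpace.norm_eq]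
  rw [← Real.sqrt_sq_eq_abs (x k)]
  apply Real.sqrt_le_sqrt
  have := Finset.single_le_sum (f := fun i => ‖x i‖ ^ 2)
    (fun i _ => by positivity) (Finset.mem_univ k)
  simpa [Real.norm_eq_abs, sq_abs] using this

-- fderiv norm bounded by iteratedFDeriv 1
lemma fderiv_norm_le_iterated {d : ℕ} (f : Rd d → ℝ) (x : Rd d) :
    ‖fderiv ℝ f x‖ ≤ ‖iteratedFDeriv ℝ 1 f x‖ := by
  apply ContinuousLinearMap.opNorm_le_bound _ (norm_nonneg _)
  intro v
  have h := iteratedFDeriv_one_apply (f := f) (x := x) (𝕜 := ℝ) (fun _ => v)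
  rw [show fderiv ℝ f x v = iteratedFDeriv ℝ 1 f x (fun _ => v) from h.symm]
  calc ‖iteratedFDeriv ℝ 1 f x (fun _ => v)‖
      ≤ ‖iteratedFDeriv ℝ 1 f x‖ * ∏ _i : Fin 1, ‖v‖ :=
        (iteratedFDeriv ℝ 1 f x).le_opNorm _
    _ = ‖iteratedFDeriv ℝ 1 f x‖ * ‖v‖ := by simp

-- Lipschitz from fderiv bound
lemma lip_of_fderiv_bound {d : ℕ} {f : Rd d → ℝ} (hf : Differentiable ℝ f) {L : ℝ}
    (hL : ∀ x, ‖fderiv ℝ f x‖ ≤ L) (p q : Rd d) : ‖f p - f q‖ ≤ L * ‖p - q‖ :=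
  Convex.norm_image_sub_le_of_norm_fderiv_le (fun x _ => hf x)
    (fun x _ => hL x) convex_univ (Set.mem_univ q) (Set.mem_univ p)


lemma contDiff_pd {d : ℕ} {f : Rd d → ℝ} (hf : ContDiff ℝ (⊤ : ℕ∞) f) (j : Fin d) :
    ContDiff ℝ (⊤ : ℕ∞) (pd j f) := by
  have h1 : ContDiff ℝ (⊤ : ℕ∞) (fderiv ℝ f) := hf.fderiv_right (le_refl _)
  exact (ContinuousLinearMap.apply ℝ ℝ (EuclideanSpace.single j 1)).contDiff.comp h1

lemma contDiff_magField {d : ℕ} {A : Fin d → Rd d → ℝ} (hA : ∀ j, ContDiff ℝ (⊤ : ℕ∞) (A j))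
    (j k : Fin d) : ContDiff ℝ (⊤ : ℕ∞) (magField A j k) :=
  (contDiff_pd (hA k) j).sub (contDiff_pd (hA j) k)

def gker {d : ℕ} (f : Rd d → ℝ) (x₀ y : Rd d) : ℝ :=
  ∫ τ in (0:ℝ)..1, f (x₀ + τ • y) * τ

lemma gker_sub_half {d : ℕ} {f : Rd d → ℝ} (hf : Continuous f) {L : ℝ} (hL : 0 ≤ L)
    (hlip : ∀ p q : Rd d, ‖f p - f q‖ ≤ L * ‖p - q‖) (x₀ y : Rd d) :
    ‖gker f x₀ y - f x₀ / 2‖ ≤ L * ‖y‖ / 3 := by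
  have hcont : Continuous fun τ : ℝ => f (x₀ + τ • y) * τ := by
    exact (hf.comp (by continuity)).mul continuous_id
  have hI1 : IntervalIntegrable (fun τ : ℝ => f (x₀ + τ • y) * τ) volume 0 1 :=
    hcont.intervalIntegrable _ _
  have hI2 : IntervalIntegrable (fun τ : ℝ => f x₀ * τ) volume 0 1 :=
    (continuous_const.mul continuous_id).intervalIntegrable _ _
  have hhalf : (∫ τ in (0:ℝ)..1, f x₀ * τ) = f x₀ / 2 := by
    rw [intervalIntegral.integral_const_mul, integral_id]
    ring
  have heq : gker f x₀ y - f x₀ / 2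
      = ∫ τ in (0:ℝ)..1, (f (x₀ + τ • y) - f x₀) * τ := by
    rw [gker, ← hhalf, ← intervalIntegral.integral_sub hI1 hI2]
    congr 1; funext τ; ring
  rw [heq]
  have hb : ∀ τ ∈ Set.Icc (0:ℝ) 1, ‖(f (x₀ + τ • y) - f x₀) * τ‖ ≤ L * ‖y‖ * τ ^ 2 := by
    intro τ hτ
    rw [norm_mul]
    have h1 : ‖f (x₀ + τ • y) - f x₀‖ ≤ L * (τ * ‖y‖) := by
      have := hlip (x₀ + τ • y) x₀
      simpa [norm_smul, abs_of_nonneg hτ.1] using this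
    have h2 : ‖τ‖ = τ := by rw [Real.norm_eq_abs, abs_of_nonneg hτ.1]
    calc ‖f (x₀ + τ • y) - f x₀‖ * ‖τ‖ ≤ (L * (τ * ‖y‖)) * τ := by
          rw [h2]; exact mul_le_mul_of_nonneg_right h1 hτ.1
      _ = L * ‖y‖ * τ ^ 2 := by ring
  calc ‖∫ τ in (0:ℝ)..1, (f (x₀ + τ • y) - f x₀) * τ‖
      ≤ |∫ τ in (0:ℝ)..1, L * ‖y‖ * τ ^ 2| := by
        apply intervalIntegral.norm_integral_le_abs_of_norm_le
        · filter_upwards [ae_restrict_mem measurableSet_uIoc] with τ hτ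
          replace hτ : τ ∈ Set.Ioc (0:ℝ) 1 := by simpa [Set.uIoc_of_le] using hτ
          exact hb τ ⟨le_of_lt hτ.1, hτ.2⟩
        · exact ((continuous_const.mul (continuous_pow 2)).intervalIntegrable _ _)
    _ = L * ‖y‖ / 3 := by
        rw [intervalIntegral.integral_const_mul, integral_pow]
        rw [abs_of_nonneg (by positivity)]
        norm_num
        ring

lemma gker_norm_le {d : ℕ} {f : Rd d → ℝ} (hf : Continuous f) {M : ℝ}
    (hM : ∀ x, ‖f x‖ ≤ M) (x₀ y : Rd d) : ‖gker f x₀ y‖ ≤ M / 2 := by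
  have hM0 : 0 ≤ M := le_trans (norm_nonneg _) (hM x₀)
  rw [gker]
  calc ‖∫ τ in (0:ℝ)..1, f (x₀ + τ • y) * τ‖
      ≤ |∫ τ in (0:ℝ)..1, M * τ| := by
        apply intervalIntegral.norm_integral_le_abs_of_norm_le
        · filter_upwards [ae_restrict_mem measurableSet_uIoc] with τ hτ
          replace hτ : τ ∈ Set.Ioc (0:ℝ) 1 := by simpa [Set.uIoc_of_le] using hτ
          rw [norm_mul]
          have h2 : ‖τ‖ = τ := by rw [Real.norm_eq_abs, abs_of_nonneg (le_of_lt hτ.1)]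
          rw [h2]
          exact mul_le_mul_of_nonneg_right (hM _) (le_of_lt hτ.1)
        · exact ((continuous_const.mul continuous_id).intervalIntegrable _ _)
    _ = M / 2 := by
        rw [intervalIntegral.integral_const_mul, integral_id, abs_of_nonneg (by positivity)]
        ring

/-- Derivative of the gauge kernel integral w.r.t. `y`. -/
lemma gker_hasFDerivAt {d : ℕ} {f : Rd d → ℝ} (hf : ContDiff ℝ (⊤ : ℕ∞) f) {L : ℝ}
    (hL : ∀ x, ‖fderiv ℝ f x‖ ≤ L) (x₀ y : Rd d) :
    HasFDerivAt (gker f x₀)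
      (∫ τ in (0:ℝ)..1, (τ * τ) • fderiv ℝ f (x₀ + τ • y)) y := by
  have hfd : Continuous (fderiv ℝ f) :=
    (hf.fderiv_right (m := 0) (by exact_mod_cast le_top)).continuous
  have hdiff : Differentiable ℝ f := hf.differentiable (by simp)
  have hinner : ∀ x : Rd d, Continuous fun τ : ℝ => x₀ + τ • x := by
    intro x; exact continuous_const.add (continuous_id.smul continuous_const)
  apply intervalIntegral.hasFDerivAt_integral_of_dominated_of_fderiv_le
    (F := fun (y : Rd d) (τ : ℝ) => f (x₀ + τ • y) * τ)
    (F' := fun (y : Rd d) (τ : ℝ) => (τ * τ) • fderiv ℝ f (x₀ + τ • y))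
    (bound := fun _ => L) (s := Metric.ball y 1) (Metric.ball_mem_nhds y one_pos)
  · filter_upwards with x
    exact (((hf.continuous.comp (hinner x)).mul continuous_id)).aestronglyMeasurable
  · exact ((hf.continuous.comp (hinner y)).mul continuous_id).intervalIntegrable _ _
  · exact ((continuous_id.mul continuous_id).smul
      (hfd.comp (hinner y))).aestronglyMeasurable
  · filter_upwards with τ
    intro hτ x _
    replace hτ : τ ∈ Set.Ioc (0:ℝ) 1 := by simpa [Set.uIoc_of_le] using hτ
    rw [norm_smul (τ * τ) (fderiv ℝ f (x₀ + τ • x))]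
    calc ‖τ * τ‖ * ‖fderiv ℝ f (x₀ + τ • x)‖ ≤ 1 * L := by
          apply mul_le_mul _ (hL _) (norm_nonneg _) zero_le_one
          rw [Real.norm_eq_abs, abs_mul, abs_of_nonneg hτ.1.le]
          calc τ * τ ≤ 1 * 1 := mul_le_mul hτ.2 hτ.2 hτ.1.le zero_le_one
            _ = 1 := one_mul 1
      _ = L := one_mul L
  · exact intervalIntegrable_const
  · filter_upwards with τ
    intro hτ x _
    have h1 : HasFDerivAt (fun y : Rd d => x₀ + τ • y)
        (τ • ContinuousLinearMap.id ℝ (Rd d)) x :=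
      ((hasFDerivAt_id x).const_smul τ).const_add x₀
    have h2 : HasFDerivAt (fun y : Rd d => f (x₀ + τ • y))
        ((fderiv ℝ f (x₀ + τ • x)).comp (τ • ContinuousLinearMap.id ℝ (Rd d))) x :=
      (hdiff (x₀ + τ • x)).hasFDerivAt.comp x h1
    have h3 := h2.mul_const τ
    refine h3.congr_fderiv ?_
    ext v
    simp
    ring

/-- Norm bound for the derivative integral. -/
lemma gker_deriv_norm_le {d : ℕ} {f : Rd d → ℝ} (hf : ContDiff ℝ (⊤ : ℕ∞) f) {L : ℝ}
    (hL : ∀ x, ‖fderiv ℝ f x‖ ≤ L) (x₀ y : Rd d) :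
    ‖∫ τ in (0:ℝ)..1, (τ * τ) • fderiv ℝ f (x₀ + τ • y)‖ ≤ L / 3 := by
  have hL0 : 0 ≤ L := le_trans (norm_nonneg _) (hL x₀)
  have hfd : Continuous (fderiv ℝ f) :=
    (hf.fderiv_right (m := 0) (by exact_mod_cast le_top)).continuous
  calc ‖∫ τ in (0:ℝ)..1, (τ * τ) • fderiv ℝ f (x₀ + τ • y)‖
      ≤ |∫ τ in (0:ℝ)..1, L * τ ^ 2| := by
        apply intervalIntegral.norm_integral_le_abs_of_norm_le
        · filter_upwards [ae_restrict_mem measurableSet_uIoc] with τ hτ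
          replace hτ : τ ∈ Set.Ioc (0:ℝ) 1 := by simpa [Set.uIoc_of_le] using hτ
          rw [norm_smul, Real.norm_eq_abs, abs_mul, abs_of_nonneg hτ.1.le, ← sq]
          rw [mul_comm L (τ^2)]
          apply mul_le_mul_of_nonneg_left (hL _) (by positivity)
        · exact (continuous_const.mul (continuous_pow 2)).intervalIntegrable _ _
    _ = L / 3 := by
        rw [intervalIntegral.integral_const_mul, integral_pow,
          abs_of_nonneg (by positivity)]
        norm_num
        ring

lemma magD_sq {d : ℕ} (A : Fin d → Rd d → ℝ) (j : Fin d) (u : Rd d → ℂ)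
    (hAj : Differentiable ℝ (A j)) (hu : ContDiff ℝ (⊤ : ℕ∞) u) (Z : Rd d) :
    magD 1 A j (magD 1 A j u) Z
      = -(pd j (pd j u) Z) - (1/Complex.I) * (((pd j (A j) Z : ℝ) : ℂ) * u Z)
        - (2/Complex.I) * ((A j Z : ℂ) * pd j u Z) + ((A j Z : ℂ))^2 * u Z := by
  have hud : Differentiable ℝ u := hu.differentiable (by simp)
  have hfd : Differentiable ℝ (fderiv ℝ u) :=
    (hu.fderiv_right (m := (⊤:ℕ∞)) (le_refl _)).differentiable (by simp)
  have hpdu : Differentiable ℝ (pd j u) := by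
    intro x
    exact ((ContinuousLinearMap.apply ℝ ℂ
      (EuclideanSpace.single j (1:ℝ))).differentiableAt).comp x (hfd x)
  have hAc : ∀ x : Rd d, HasFDerivAt (fun y : Rd d => ((A j y : ℝ) : ℂ))
      (Complex.ofRealCLM.comp (fderiv ℝ (A j) x)) x := by
    intro x
    exact Complex.ofRealCLM.hasFDerivAt.comp x (hAj x).hasFDerivAt
  have hinner : HasFDerivAt (magD 1 A j u)
      ((((1:ℝ):ℂ)/Complex.I) • fderiv ℝ (pd j u) Z
        - ((A j Z : ℂ) • fderiv ℝ u Z + u Z • (Complex.ofRealCLM.comp (fderiv ℝ (A j) Z)))) Z := by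
    have h1 : HasFDerivAt (fun x : Rd d => ((1:ℝ):ℂ)/Complex.I * pd j u x)
        ((((1:ℝ):ℂ)/Complex.I) • fderiv ℝ (pd j u) Z) Z :=
      (hpdu Z).hasFDerivAt.const_mul (((1:ℝ):ℂ)/Complex.I)
    have h2 : HasFDerivAt (fun x : Rd d => ((A j x : ℝ):ℂ) * u x)
        ((A j Z : ℂ) • fderiv ℝ u Z + u Z • (Complex.ofRealCLM.comp (fderiv ℝ (A j) Z))) Z :=
      (hAc Z).mul (hud Z).hasFDerivAt
    exact h1.sub h2
  have hpd_inner : pd j (magD 1 A j u) Z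
      = ((1:ℝ):ℂ)/Complex.I * pd j (pd j u) Z
        - (((pd j (A j) Z : ℝ) : ℂ) * u Z + (A j Z : ℂ) * pd j u Z) := by
    show fderiv ℝ (magD 1 A j u) Z (EuclideanSpace.single j 1) = _
    rw [hinner.fderiv]
    simp [pd]
    ring
  rw [magD]
  rw [hpd_inner]
  rw [show magD 1 A j u Z = ((1:ℝ):ℂ)/Complex.I * pd j u Z - (A j Z : ℂ) * u Z from rfl]
  have hI : Complex.I ≠ 0 := Complex.I_ne_zero
  field_simp
  ring_nf
  simp [Complex.I_sq]
  ring

end Helpers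

/-- the rescaled operator `ℋ_{t,x₀}` (in the transverse gauge) converges to the
model operator `ℋ^{(x₀)}` at rate `O(t)`, uniformly in `x₀` and `Z`. -/
theorem statement19 (d : ℕ) (A : Fin d → Rd d → ℝ) (V : Rd d → ℝ)
    (hA : ∀ j, ContDiff ℝ (⊤ : ℕ∞) (A j)) (hV : ContDiff ℝ (⊤ : ℕ∞) V)
    (hBbdd : ∀ (j k : Fin d) (m : ℕ), ∃ C, ∀ x, ‖iteratedFDeriv ℝ m (magField A j k) x‖ ≤ C)
    (hVbdd : ∀ m : ℕ, ∃ C, ∀ x, ‖iteratedFDeriv ℝ m V x‖ ≤ C)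
    (u : Rd d → ℂ) (hu : ContDiff ℝ (⊤ : ℕ∞) u) (hsupp : HasCompactSupport u) :
    ∃ C > (0:ℝ), ∀ (x₀ : Rd d), ∀ t ∈ Set.Ioc (0:ℝ) 1, ∀ Z : Rd d,
      ‖schrodinger 1 (fun j W => t⁻¹ * Atrans A x₀ j (x₀ + t • W))
            (fun W => V (x₀ + t • W)) u Z
        - schrodinger 1 (fun j W => (1/2) * ∑ k, magField A k j x₀ * W k)
            (fun _ => V x₀) u Z‖ ≤ C * t := by
  classical
  have hB : ∀ j k, ContDiff ℝ (⊤:ℕ∞) (magField A j k) := contDiff_magField hA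
  have hBc : ∀ j k, Continuous (magField A j k) := fun j k => (hB j k).continuous
  have hBd : ∀ j k, Differentiable ℝ (magField A j k) :=
    fun j k => (hB j k).differentiable (by simp)
  -- uniform bound on B
  choose C0 hC0 using fun j k => hBbdd j k 0
  set M0 : ℝ := ∑ j : Fin d, ∑ k : Fin d, |C0 j k| with hM0def
  have hM0 : ∀ j k x, ‖magField A j k x‖ ≤ M0 := by
    intro j k x
    calc ‖magField A j k x‖ = ‖iteratedFDeriv ℝ 0 (magField A j k) x‖ :=
          (norm_iteratedFDeriv_zero).symm
      _ ≤ C0 j k := hC0 j k x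
      _ ≤ |C0 j k| := le_abs_self _
      _ ≤ M0 := by
          rw [hM0def]
          refine le_trans ?_ (Finset.single_le_sum (f := fun j' => ∑ k', |C0 j' k'|)
            (fun i _ => by positivity) (Finset.mem_univ j))
          exact Finset.single_le_sum (f := fun k' => |C0 j k'|)
            (fun i _ => by positivity) (Finset.mem_univ k)
  have hM0nn : 0 ≤ M0 := by positivity
  -- uniform bound on fderiv B
  choose C1 hC1 using fun j k => hBbdd j k 1
  set M1 : ℝ := ∑ j : Fin d, ∑ k : Fin d, |C1 j k| with hM1def
  have hM1 : ∀ j k x, ‖fderiv ℝ (magField A j k) x‖ ≤ M1 := by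
    intro j k x
    calc ‖fderiv ℝ (magField A j k) x‖ ≤ ‖iteratedFDeriv ℝ 1 (magField A j k) x‖ :=
          fderiv_norm_le_iterated _ _
      _ ≤ C1 j k := hC1 j k x
      _ ≤ |C1 j k| := le_abs_self _
      _ ≤ M1 := by
          rw [hM1def]
          refine le_trans ?_ (Finset.single_le_sum (f := fun j' => ∑ k', |C1 j' k'|)
            (fun i _ => by positivity) (Finset.mem_univ j))
          exact Finset.single_le_sum (f := fun k' => |C1 j k'|)
            (fun i _ => by positivity) (Finset.mem_univ k)
  have hM1nn : 0 ≤ M1 := by positivity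
  have hBlip : ∀ j k (p q : Rd d), ‖magField A j k p - magField A j k q‖ ≤ M1 * ‖p - q‖ :=
    fun j k => lip_of_fderiv_bound (hBd j k) (hM1 j k)
  -- bound on fderiv V
  obtain ⟨CV, hCV⟩ := hVbdd 1
  set LV : ℝ := |CV| with hLVdef
  have hVlip : ∀ p q : Rd d, ‖V p - V q‖ ≤ LV * ‖p - q‖ := by
    apply lip_of_fderiv_bound (hV.differentiable (by simp))
    intro x
    exact le_trans (le_trans (fderiv_norm_le_iterated _ _) (hCV x)) (le_abs_self _)
  have hLVnn : 0 ≤ LV := abs_nonneg _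
  -- support radius
  obtain ⟨R0, hR0⟩ := (Metric.isBounded_iff_subset_closedBall 0).mp hsupp.isBounded
  set R : ℝ := |R0| with hRdef
  have hRnn : 0 ≤ R := abs_nonneg _
  have hR : ∀ Z, Z ∈ tsupport u → ‖Z‖ ≤ R := by
    intro Z hZ
    have := hR0 hZ
    rw [Metric.mem_closedBall, dist_zero_right] at this
    exact le_trans this (le_abs_self _)
  -- bounds on u and its derivatives
  obtain ⟨Cu0, hCu0⟩ := hsupp.exists_bound_of_continuous hu.continuous
  set Cu : ℝ := |Cu0| with hCudef
  have hCu : ∀ x, ‖u x‖ ≤ Cu := fun x => le_trans (hCu0 x) (le_abs_self _)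
  have hCunn : 0 ≤ Cu := abs_nonneg _
  have hfdu_cont : Continuous (fderiv ℝ u) :=
    (hu.fderiv_right (m := 0) (by exact_mod_cast le_top)).continuous
  obtain ⟨Cu1, hCu1⟩ := (hsupp.fderiv ℝ).exists_bound_of_continuous hfdu_cont
  set Cu' : ℝ := |Cu1| with hCu'def
  have hCu' : ∀ (j : Fin d) x, ‖pd j u x‖ ≤ Cu' := by
    intro j x
    calc ‖pd j u x‖ ≤ ‖fderiv ℝ u x‖ * ‖EuclideanSpace.single j (1:ℝ)‖ :=
          (fderiv ℝ u x).le_opNorm _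
      _ = ‖fderiv ℝ u x‖ := by rw [EuclideanSpace.norm_single]; simp
      _ ≤ Cu' := le_trans (hCu1 x) (le_abs_self _)
  have hCu'nn : 0 ≤ Cu' := abs_nonneg _
  -- the constant
  set Kj : ℝ := (2*(d:ℝ)*M1*R/3) * Cu + 2*((d:ℝ)*M1*R*R/3)*Cu'
      + ((d:ℝ)*M1*R*R/3)*((d:ℝ)*M0*R)*Cu with hKjdef
  have hKjnn : 0 ≤ Kj := by positivity
  set K : ℝ := (d:ℝ)*Kj + LV*R*Cu with hKdef
  have hKnn : 0 ≤ K := by positivity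
  refine ⟨K + 1, by positivity, ?_⟩
  intro x₀ t ht Z
  obtain ⟨ht0, ht1⟩ := ht
  set a : Fin d → Rd d → ℝ := fun j W => t⁻¹ * Atrans A x₀ j (x₀ + t • W) with hadef
  set b : Fin d → Rd d → ℝ := fun j W => (1/2) * ∑ k, magField A k j x₀ * W k with hbdef
  -- rewriting a
  have ha_eq : ∀ j W, a j W = ∑ k, gker (magField A k j) x₀ (t • W) * W k := by
    intro j W
    rw [hadef]
    simp only [Atrans, add_sub_cancel_left, gker]
    rw [Finset.mul_sum]
    refine Finset.sum_congr rfl fun k _ => ?_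
    have hk : (t • W) k = t * W k := rfl
    rw [hk]
    field_simp
  -- derivative of a
  set G : Fin d → Fin d → (Rd d →L[ℝ] ℝ) := fun j k =>
    ∫ τ in (0:ℝ)..1, (τ * τ) • fderiv ℝ (magField A k j) (x₀ + τ • (t • Z)) with hGdef
  have hGnorm : ∀ j k, ‖∫ τ in (0:ℝ)..1, (τ * τ) • fderiv ℝ (magField A k j) (x₀ + τ • (t • Z))‖ ≤ M1 / 3 := fun j k =>
    gker_deriv_norm_le (hB k j) (hM1 k j) x₀ (t • Z)
  have haD : ∀ j, ∀ W : Rd d, HasFDerivAt (a j)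
      (∑ k, ((gker (magField A k j) x₀ (t • W)) • (EuclideanSpace.proj k : Rd d →L[ℝ] ℝ)
        + (W k) • ((∫ τ in (0:ℝ)..1, (τ * τ) •
            fderiv ℝ (magField A k j) (x₀ + τ • (t • W))).comp
              (t • ContinuousLinearMap.id ℝ (Rd d))))) W := by
    intro j W
    have hfun : a j = fun W => ∑ k, gker (magField A k j) x₀ (t • W) * W k :=
      funext (ha_eq j)
    rw [hfun]
    apply HasFDerivAt.fun_sum
    intro k _
    have hsm : HasFDerivAt (fun W : Rd d => t • W)
        (t • ContinuousLinearMap.id ℝ (Rd d)) W := (hasFDerivAt_id W).const_smul t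
    have hg := (gker_hasFDerivAt (hB k j) (hM1 k j) x₀ (t • W)).comp W hsm
    have hp : HasFDerivAt (fun W : Rd d => W k)
        (EuclideanSpace.proj k : Rd d →L[ℝ] ℝ) W := by
      exact (EuclideanSpace.proj (𝕜 := ℝ) k).hasFDerivAt
    exact hg.mul hp
  have haDiff : ∀ j, Differentiable ℝ (a j) := fun j W => (haD j W).differentiableAt
  -- derivative of b
  have hbD : ∀ j, ∀ W : Rd d, HasFDerivAt (b j)
      (∑ k, ((1/2) * magField A k j x₀) • (EuclideanSpace.proj k : Rd d →L[ℝ] ℝ)) W := by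
    intro j W
    have hfun : b j = fun W => ∑ k, ((1/2) * magField A k j x₀) * W k := by
      funext W
      show (1/2 : ℝ) * ∑ k, magField A k j x₀ * W k = _
      rw [Finset.mul_sum]
      exact Finset.sum_congr rfl fun k _ => by ring
    rw [hfun]
    apply HasFDerivAt.fun_sum
    intro k _
    exact ((EuclideanSpace.proj k : Rd d →L[ℝ] ℝ).hasFDerivAt (x := W)).const_mul _
  have hbDiff : ∀ j, Differentiable ℝ (b j) := fun j W => (hbD j W).differentiableAt
  -- expansion identity
  have key : schrodinger 1 a (fun W => V (x₀ + t • W)) u Z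
      - schrodinger 1 b (fun _ => V x₀) u Z
      = (∑ j, (-((1/Complex.I) * (((pd j (a j) Z : ℝ):ℂ) - ((pd j (b j) Z : ℝ):ℂ)) * u Z)
          - (2/Complex.I) * (((a j Z : ℝ):ℂ) - ((b j Z : ℝ):ℂ)) * pd j u Z
          + (((a j Z : ℝ):ℂ) - ((b j Z : ℝ):ℂ)) * (((a j Z : ℝ):ℂ) + ((b j Z : ℝ):ℂ)) * u Z))
        + (((V (x₀ + t • Z) : ℝ):ℂ) - ((V x₀ : ℝ):ℂ)) * u Z := by
    have hS : (∑ j, magD 1 a j (magD 1 a j u) Z) - (∑ j, magD 1 b j (magD 1 b j u) Z)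
        = ∑ j, (-((1/Complex.I) * (((pd j (a j) Z : ℝ):ℂ) - ((pd j (b j) Z : ℝ):ℂ)) * u Z)
          - (2/Complex.I) * (((a j Z : ℝ):ℂ) - ((b j Z : ℝ):ℂ)) * pd j u Z
          + (((a j Z : ℝ):ℂ) - ((b j Z : ℝ):ℂ)) * (((a j Z : ℝ):ℂ) + ((b j Z : ℝ):ℂ)) * u Z) := by
      rw [← Finset.sum_sub_distrib]
      refine Finset.sum_congr rfl fun j _ => ?_
      rw [magD_sq a j u (haDiff j) hu Z, magD_sq b j u (hbDiff j) hu Z]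
      ring
    simp only [schrodinger]
    push_cast
    linear_combination hS
  rw [key]
  -- case split on support
  by_cases hZsupp : Z ∈ tsupport u
  case neg =>
    have hu0 : u Z = 0 := image_eq_zero_of_notMem_tsupport hZsupp
    have hdu0 : ∀ j : Fin d, pd j u Z = 0 := by
      intro j
      have : fderiv ℝ u Z = 0 :=
        image_eq_zero_of_notMem_tsupport (fun h => hZsupp (tsupport_fderiv_subset ℝ h))
      simp [pd, this]
    simp only [hu0, hdu0, mul_zero, zero_mul, sub_zero, neg_zero, add_zero, zero_add,
      Finset.sum_const_zero, norm_zero]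
    positivity
  case pos =>
    have hZR : ‖Z‖ ≤ R := hR Z hZsupp
    have htZ : ‖t • Z‖ ≤ t * R := by
      rw [norm_smul, Real.norm_eq_abs, abs_of_pos ht0]
      exact mul_le_mul_of_nonneg_left hZR ht0.le
    -- per-k difference bound for gker
    have hgk : ∀ j k, ‖gker (magField A k j) x₀ (t • Z) - magField A k j x₀ / 2‖
        ≤ M1 * (t * R) / 3 := by
      intro j k
      calc ‖gker (magField A k j) x₀ (t • Z) - magField A k j x₀ / 2‖
          ≤ M1 * ‖t • Z‖ / 3 := gker_sub_half (hBc k j) hM1nn (hBlip k j) x₀ (t • Z)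
        _ ≤ M1 * (t * R) / 3 := by
            apply div_le_div_of_nonneg_right ?_ (by norm_num)
            exact mul_le_mul_of_nonneg_left htZ hM1nn
    -- bound |a - b|
    have hab : ∀ j, ‖a j Z - b j Z‖ ≤ ((d:ℝ)*M1*R*R/3) * t := by
      intro j
      have hbj : b j Z = ∑ k, (magField A k j x₀ / 2) * Z k := by
        show (1/2 : ℝ) * ∑ k, magField A k j x₀ * Z k = _
        rw [Finset.mul_sum]
        exact Finset.sum_congr rfl fun k _ => by ring
      rw [ha_eq j Z, hbj, ← Finset.sum_sub_distrib]
      calc ‖∑ k, (gker (magField A k j) x₀ (t • Z) * Z k - magField A k j x₀ / 2 * Z k)‖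
          ≤ ∑ k : Fin d, ‖(gker (magField A k j) x₀ (t • Z) - magField A k j x₀ / 2) * Z k‖ := by
            refine le_trans (norm_sum_le _ _) (le_of_eq (Finset.sum_congr rfl fun k _ => ?_))
            ring_nf
        _ ≤ ∑ _k : Fin d, (M1 * (t * R) / 3) * R := by
            refine Finset.sum_le_sum fun k _ => ?_
            rw [norm_mul]
            apply mul_le_mul (hgk j k) (le_trans (coord_le_norm Z k) hZR)
              (norm_nonneg _) (by positivity)
        _ = (d:ℝ) * ((M1 * (t * R) / 3) * R) := by
            rw [Finset.sum_const, Finset.card_univ, Fintype.card_fin, nsmul_eq_mul]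
        _ = ((d:ℝ)*M1*R*R/3) * t := by ring
    -- bound |a| + |b|
    have habs : ∀ j, ‖a j Z‖ + ‖b j Z‖ ≤ (d:ℝ)*M0*R := by
      intro j
      have h1 : ‖a j Z‖ ≤ (d:ℝ) * (M0/2 * R) := by
        rw [ha_eq j Z]
        calc ‖∑ k, gker (magField A k j) x₀ (t • Z) * Z k‖
            ≤ ∑ k : Fin d, ‖gker (magField A k j) x₀ (t • Z) * Z k‖ := norm_sum_le _ _
          _ ≤ ∑ _k : Fin d, (M0/2 * R) := by
              refine Finset.sum_le_sum fun k _ => ?_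
              rw [norm_mul]
              exact mul_le_mul (gker_norm_le (hBc k j) (hM0 k j) x₀ (t • Z))
                (le_trans (coord_le_norm Z k) hZR) (norm_nonneg _) (by positivity)
          _ = (d:ℝ) * (M0/2 * R) := by
              rw [Finset.sum_const, Finset.card_univ, Fintype.card_fin, nsmul_eq_mul]
      have h2 : ‖b j Z‖ ≤ (d:ℝ) * (M0/2 * R) := by
        have hbj : b j Z = ∑ k, (magField A k j x₀ / 2) * Z k := by
          show (1/2 : ℝ) * ∑ k, magField A k j x₀ * Z k = _
          rw [Finset.mul_sum]
          exact Finset.sum_congr rfl fun k _ => by ring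
        rw [hbj]
        calc ‖∑ k, (magField A k j x₀ / 2) * Z k‖
            ≤ ∑ k : Fin d, ‖(magField A k j x₀ / 2) * Z k‖ := norm_sum_le _ _
          _ ≤ ∑ _k : Fin d, (M0/2 * R) := by
              refine Finset.sum_le_sum fun k _ => ?_
              rw [norm_mul]
              refine mul_le_mul ?_ (le_trans (coord_le_norm Z k) hZR)
                (norm_nonneg _) (by positivity)
              rw [norm_div, Real.norm_two]
              exact div_le_div_of_nonneg_right (hM0 k j x₀) (by norm_num)
          _ = (d:ℝ) * (M0/2 * R) := by
              rw [Finset.sum_const, Finset.card_univ, Fintype.card_fin, nsmul_eq_mul]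
      calc ‖a j Z‖ + ‖b j Z‖ ≤ (d:ℝ) * (M0/2 * R) + (d:ℝ) * (M0/2 * R) := add_le_add h1 h2
        _ = (d:ℝ)*M0*R := by ring
    -- bound |pd a - pd b|
    have hpd : ∀ j, ‖pd j (a j) Z - pd j (b j) Z‖ ≤ (2*(d:ℝ)*M1*R/3) * t := by
      intro j
      have h1 : pd j (a j) Z = ∑ k, (gker (magField A k j) x₀ (t • Z)
          * (EuclideanSpace.single j (1:ℝ)) k
          + Z k * (t * (∫ τ in (0:ℝ)..1, (τ * τ) • fderiv ℝ (magField A k j) (x₀ + τ • (t • Z))) (EuclideanSpace.single j (1:ℝ)))) := by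
        show fderiv ℝ (a j) Z (EuclideanSpace.single j 1) = _
        rw [(haD j Z).fderiv]
        simp only [ContinuousLinearMap.sum_apply, ContinuousLinearMap.add_apply,
          ContinuousLinearMap.smul_apply, ContinuousLinearMap.comp_apply,
          ContinuousLinearMap.id_apply, smul_eq_mul, _root_.map_smul,
          PiLp.proj_apply]
      have h2 : pd j (b j) Z = ∑ k, ((1/2) * magField A k j x₀)
          * (EuclideanSpace.single j (1:ℝ)) k := by
        show fderiv ℝ (b j) Z (EuclideanSpace.single j 1) = _
        rw [(hbD j Z).fderiv]
        simp only [ContinuousLinearMap.sum_apply, ContinuousLinearMap.smul_apply,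
          smul_eq_mul, PiLp.proj_apply]
      rw [h1, h2, ← Finset.sum_sub_distrib]
      have hsingle : ∀ k : Fin d, ‖(EuclideanSpace.single j (1:ℝ)) k‖ ≤ 1 := by
        intro k
        rw [EuclideanSpace.single_apply]
        split <;> simp
      calc ‖∑ k, (gker (magField A k j) x₀ (t • Z) * (EuclideanSpace.single j (1:ℝ)) k
            + Z k * (t * (∫ τ in (0:ℝ)..1, (τ * τ) • fderiv ℝ (magField A k j) (x₀ + τ • (t • Z))) (EuclideanSpace.single j (1:ℝ)))
            - (1/2) * magField A k j x₀ * (EuclideanSpace.single j (1:ℝ)) k)‖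
          ≤ ∑ k : Fin d, ((M1 * (t * R) / 3) * 1 + R * (t * (M1/3))) := by
            refine le_trans (norm_sum_le _ _) (Finset.sum_le_sum fun k _ => ?_)
            have e1 : gker (magField A k j) x₀ (t • Z) * (EuclideanSpace.single j (1:ℝ)) k
                + Z k * (t * (∫ τ in (0:ℝ)..1, (τ * τ) • fderiv ℝ (magField A k j) (x₀ + τ • (t • Z))) (EuclideanSpace.single j (1:ℝ)))
                - (1/2) * magField A k j x₀ * (EuclideanSpace.single j (1:ℝ)) k
                = (gker (magField A k j) x₀ (t • Z) - magField A k j x₀ / 2)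
                    * (EuclideanSpace.single j (1:ℝ)) k
                  + Z k * (t * (∫ τ in (0:ℝ)..1, (τ * τ) • fderiv ℝ (magField A k j) (x₀ + τ • (t • Z))) (EuclideanSpace.single j (1:ℝ))) := by ring
            rw [e1]
            refine le_trans (norm_add_le _ _) (add_le_add ?_ ?_)
            · rw [norm_mul]
              exact mul_le_mul (hgk j k) (hsingle k) (norm_nonneg _) (by positivity)
            · rw [norm_mul, norm_mul]
              refine mul_le_mul (le_trans (coord_le_norm Z k) hZR) ?_
                (by positivity) hRnn
              refine mul_le_mul (le_of_eq (Real.norm_eq_abs t ▸ abs_of_pos ht0)) ?_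
                (norm_nonneg _) ht0.le
              calc ‖(∫ τ in (0:ℝ)..1, (τ * τ) • fderiv ℝ (magField A k j) (x₀ + τ • (t • Z))) (EuclideanSpace.single j (1:ℝ))‖
                  ≤ ‖∫ τ in (0:ℝ)..1, (τ * τ) • fderiv ℝ (magField A k j) (x₀ + τ • (t • Z))‖ * ‖EuclideanSpace.single j (1:ℝ)‖ := (G j k).le_opNorm _
                _ ≤ (M1/3) * 1 := by
                    refine mul_le_mul (hGnorm j k) ?_ (norm_nonneg _) (by positivity)
                    rw [EuclideanSpace.norm_single]; simp
                _ = M1/3 := mul_one _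
        _ = (d:ℝ) * ((M1 * (t * R) / 3) * 1 + R * (t * (M1/3))) := by
            rw [Finset.sum_const, Finset.card_univ, Fintype.card_fin, nsmul_eq_mul]
        _ = (2*(d:ℝ)*M1*R/3) * t := by ring
    -- V difference bound
    have hVdiff : ‖V (x₀ + t • Z) - V x₀‖ ≤ LV * (t * R) := by
      calc ‖V (x₀ + t • Z) - V x₀‖ ≤ LV * ‖(x₀ + t • Z) - x₀‖ := hVlip _ _
        _ = LV * ‖t • Z‖ := by rw [add_sub_cancel_left]
        _ ≤ LV * (t * R) := mul_le_mul_of_nonneg_left htZ hLVnn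
    -- per-j bound
    have hTj : ∀ j : Fin d,
        ‖-((1/Complex.I) * (((pd j (a j) Z : ℝ):ℂ) - ((pd j (b j) Z : ℝ):ℂ)) * u Z)
          - (2/Complex.I) * (((a j Z : ℝ):ℂ) - ((b j Z : ℝ):ℂ)) * pd j u Z
          + (((a j Z : ℝ):ℂ) - ((b j Z : ℝ):ℂ)) * (((a j Z : ℝ):ℂ) + ((b j Z : ℝ):ℂ)) * u Z‖
        ≤ Kj * t := by
      intro j
      have hI1 : ‖(1:ℂ)/Complex.I‖ = 1 := by simp
      have hI2 : ‖(2:ℂ)/Complex.I‖ = 2 := by simp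
      have n1 : ‖(1/Complex.I) * (((pd j (a j) Z : ℝ):ℂ) - ((pd j (b j) Z : ℝ):ℂ)) * u Z‖
          ≤ ((2*(d:ℝ)*M1*R/3) * t) * Cu := by
        rw [norm_mul, norm_mul, hI1, one_mul]
        have : (((pd j (a j) Z : ℝ):ℂ) - ((pd j (b j) Z : ℝ):ℂ))
            = (((pd j (a j) Z - pd j (b j) Z : ℝ)):ℂ) := by push_cast; ring
        rw [this, Complex.norm_real]
        exact mul_le_mul (hpd j) (hCu Z) (norm_nonneg _) (by positivity)
      have n2 : ‖(2/Complex.I) * (((a j Z : ℝ):ℂ) - ((b j Z : ℝ):ℂ)) * pd j u Z‖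
          ≤ 2 * ((((d:ℝ)*M1*R*R/3) * t) * Cu') := by
        rw [norm_mul, norm_mul, hI2]
        have : (((a j Z : ℝ):ℂ) - ((b j Z : ℝ):ℂ)) = (((a j Z - b j Z : ℝ)):ℂ) := by
          push_cast; ring
        rw [this, Complex.norm_real, mul_assoc]
        refine mul_le_mul_of_nonneg_left ?_ (by norm_num)
        exact mul_le_mul (hab j) (hCu' j Z) (norm_nonneg _) (by positivity)
      have n3 : ‖(((a j Z : ℝ):ℂ) - ((b j Z : ℝ):ℂ)) * (((a j Z : ℝ):ℂ) + ((b j Z : ℝ):ℂ))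
            * u Z‖ ≤ ((((d:ℝ)*M1*R*R/3) * t) * ((d:ℝ)*M0*R)) * Cu := by
        rw [norm_mul, norm_mul]
        have e1 : (((a j Z : ℝ):ℂ) - ((b j Z : ℝ):ℂ)) = (((a j Z - b j Z : ℝ)):ℂ) := by
          push_cast; ring
        have e2 : (((a j Z : ℝ):ℂ) + ((b j Z : ℝ):ℂ)) = (((a j Z + b j Z : ℝ)):ℂ) := by
          push_cast; ring
        rw [e1, e2, Complex.norm_real, Complex.norm_real]
        refine mul_le_mul ?_ (hCu Z) (norm_nonneg _) (by positivity)
        refine mul_le_mul (hab j) ?_ (norm_nonneg _) (by positivity)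
        exact le_trans (norm_add_le _ _) (habs j)
      calc ‖-((1/Complex.I) * (((pd j (a j) Z : ℝ):ℂ) - ((pd j (b j) Z : ℝ):ℂ)) * u Z)
            - (2/Complex.I) * (((a j Z : ℝ):ℂ) - ((b j Z : ℝ):ℂ)) * pd j u Z
            + (((a j Z : ℝ):ℂ) - ((b j Z : ℝ):ℂ)) * (((a j Z : ℝ):ℂ) + ((b j Z : ℝ):ℂ)) * u Z‖
          ≤ ‖-((1/Complex.I) * (((pd j (a j) Z : ℝ):ℂ) - ((pd j (b j) Z : ℝ):ℂ)) * u Z)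
            - (2/Complex.I) * (((a j Z : ℝ):ℂ) - ((b j Z : ℝ):ℂ)) * pd j u Z‖
            + ‖(((a j Z : ℝ):ℂ) - ((b j Z : ℝ):ℂ)) * (((a j Z : ℝ):ℂ) + ((b j Z : ℝ):ℂ)) * u Z‖ :=
            norm_add_le _ _
        _ ≤ (‖(1/Complex.I) * (((pd j (a j) Z : ℝ):ℂ) - ((pd j (b j) Z : ℝ):ℂ)) * u Z‖
            + ‖(2/Complex.I) * (((a j Z : ℝ):ℂ) - ((b j Z : ℝ):ℂ)) * pd j u Z‖)
            + ‖(((a j Z : ℝ):ℂ) - ((b j Z : ℝ):ℂ)) * (((a j Z : ℝ):ℂ) + ((b j Z : ℝ):ℂ)) * u Z‖ := by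
            refine add_le_add ?_ le_rfl
            refine le_trans (norm_sub_le _ _) ?_
            rw [norm_neg]
        _ ≤ (((2*(d:ℝ)*M1*R/3) * t) * Cu + 2 * ((((d:ℝ)*M1*R*R/3) * t) * Cu'))
            + ((((d:ℝ)*M1*R*R/3) * t) * ((d:ℝ)*M0*R)) * Cu :=
            add_le_add (add_le_add n1 n2) n3
        _ = Kj * t := by rw [hKjdef]; ring
    -- assemble
    calc ‖(∑ j, (-((1/Complex.I) * (((pd j (a j) Z : ℝ):ℂ) - ((pd j (b j) Z : ℝ):ℂ)) * u Z)
          - (2/Complex.I) * (((a j Z : ℝ):ℂ) - ((b j Z : ℝ):ℂ)) * pd j u Z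
          + (((a j Z : ℝ):ℂ) - ((b j Z : ℝ):ℂ)) * (((a j Z : ℝ):ℂ) + ((b j Z : ℝ):ℂ)) * u Z))
        + (((V (x₀ + t • Z) : ℝ):ℂ) - ((V x₀ : ℝ):ℂ)) * u Z‖
        ≤ (∑ _j : Fin d, Kj * t) + (LV * (t * R)) * Cu := by
          refine le_trans (norm_add_le _ _) (add_le_add ?_ ?_)
          · exact le_trans (norm_sum_le _ _) (Finset.sum_le_sum fun j _ => hTj j)
          · rw [norm_mul]
            have : (((V (x₀ + t • Z) : ℝ):ℂ) - ((V x₀ : ℝ):ℂ))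
                = (((V (x₀ + t • Z) - V x₀ : ℝ)):ℂ) := by push_cast; ring
            rw [this, Complex.norm_real]
            exact mul_le_mul hVdiff (hCu Z) (norm_nonneg _) (by positivity)
      _ = ((d:ℝ) * Kj + LV * R * Cu) * t := by
          rw [Finset.sum_const, Finset.card_univ, Fintype.card_fin, nsmul_eq_mul]
          ring
      _ ≤ (K + 1) * t := by
          rw [hKdef]
          nlinarith [ht0.le]
end
end
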